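/- arXiv:2306.13184 — 2 statements merged into one kernel-verified Lean document; each statement's English description precedes it below -/
import Mathlib

section
/- Let W be independent of (X,Y). If a random variable U satisfies I(U;X) = ε and H(Y|U,X,W) = 0, then H(U) ≥ min_{x∈𝒳} H(Y|X=x) + ε. -/
/-- Shannon entropy (base 2) of a finitely supported distribution given as a function. -/
noncomputable def ent {α : Type*} [Fintype α] (q : α → ℝ) : ℝ :=
  - ∑ a, q a * Real.logb 2 (q a)

section EntLemmas
open Finset Real
variable {A B : Type*} [Fintype A] [Fintype B]

lemma sum3_rev {A B C : Type*} [Fintype A] [Fintype B] [Fintype C] (g : A → B → C → ℝ) :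
    ∑ a, ∑ b, ∑ c, g a b c = ∑ c, ∑ b, ∑ a, g a b c := by
  calc ∑ a, ∑ b, ∑ c, g a b c
      = ∑ b, ∑ a, ∑ c, g a b c := Finset.sum_comm
    _ = ∑ b, ∑ c, ∑ a, g a b c := Finset.sum_congr rfl fun b _ => Finset.sum_comm
    _ = ∑ c, ∑ b, ∑ a, g a b c := Finset.sum_comm

lemma ent_comp_equiv {α β : Type*} [Fintype α] [Fintype β] (e : α ≃ β) (q : β → ℝ) :
    ent (fun a => q (e a)) = ent q := by
  unfold ent
  rw [Fintype.sum_equiv e _ (fun b => q b * Real.logb 2 (q b)) (fun a => rfl)]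

lemma gibbs {α : Type*} [Fintype α] (f g : α → ℝ) (hf : ∀ a, 0 ≤ f a) (hg : ∀ a, 0 ≤ g a)
    (hfg : ∀ a, 0 < f a → 0 < g a) (hsum : ∑ a, g a ≤ ∑ a, f a) :
    ∑ a, f a * Real.logb 2 (g a) ≤ ∑ a, f a * Real.logb 2 (f a) := by
  have key : ∀ a, f a * Real.log (g a) - f a * Real.log (f a) ≤ g a - f a := by
    intro a
    rcases eq_or_lt_of_le (hf a) with h | h
    · simp [← h, hg a]
    · have hga := hfg a h
      have h1 : Real.log (g a / f a) ≤ g a / f a - 1 :=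
        Real.log_le_sub_one_of_pos (div_pos hga h)
      have h2 : Real.log (g a / f a) = Real.log (g a) - Real.log (f a) :=
        Real.log_div (ne_of_gt hga) (ne_of_gt h)
      rw [h2] at h1
      have := mul_le_mul_of_nonneg_left h1 (le_of_lt h)
      rw [mul_sub, mul_sub, mul_div_cancel₀ _ (ne_of_gt h), mul_one] at this
      linarith
  have hlog : ∑ a, (f a * Real.log (g a)) ≤ ∑ a, (f a * Real.log (f a)) := by
    have h3 : ∑ a, (f a * Real.log (g a) - f a * Real.log (f a)) ≤ ∑ a, (g a - f a) :=
      Finset.sum_le_sum (fun a _ => key a)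
    simp only [Finset.sum_sub_distrib] at h3
    linarith
  have hln2 : (0:ℝ) < Real.log 2 := Real.log_pos one_lt_two
  simp only [Real.logb, div_eq_mul_inv, ← mul_assoc]
  rw [← Finset.sum_mul, ← Finset.sum_mul]
  exact mul_le_mul_of_nonneg_right hlog (inv_nonneg.2 hln2.le)


lemma mul_logb_le_mul_logb {x y : ℝ} (hx : 0 ≤ x) (hxy : x ≤ y) :
    x * Real.logb 2 x ≤ x * Real.logb 2 y := by
  rcases eq_or_lt_of_le hx with h | h
  · simp [← h]
  · exact mul_le_mul_of_nonneg_left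
      (Real.logb_le_logb_of_le one_lt_two h hxy) h.le

lemma ent_marg_le (q : A × B → ℝ) (h0 : ∀ z, 0 ≤ q z) :
    ent (fun a => ∑ b, q (a, b)) ≤ ent q := by
  unfold ent
  rw [neg_le_neg_iff]
  rw [Fintype.sum_prod_type]
  apply Finset.sum_le_sum
  intro a _
  calc ∑ b, q (a, b) * Real.logb 2 (q (a, b))
      ≤ ∑ b, q (a, b) * Real.logb 2 (∑ b', q (a, b')) := by
        apply Finset.sum_le_sum
        intro b _
        exact mul_logb_le_mul_logb (h0 _)
          (Finset.single_le_sum (fun b' _ => h0 (a, b')) (Finset.mem_univ b))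
    _ = (∑ b, q (a, b)) * Real.logb 2 (∑ b', q (a, b')) := by
        rw [← Finset.sum_mul]

lemma marg_nonneg (q : A × B → ℝ) (h0 : ∀ z, 0 ≤ q z) (a : A) :
    0 ≤ ∑ b, q (a, b) := Finset.sum_nonneg fun b _ => h0 (a, b)

lemma ent_subadd (q : A × B → ℝ) (h0 : ∀ z, 0 ≤ q z) (h1 : ∑ z, q z = 1) :
    ent q ≤ ent (fun a => ∑ b, q (a, b)) + ent (fun b => ∑ a, q (a, b)) := by
  set qA : A → ℝ := fun a => ∑ b, q (a, b) with hqA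
  set qB : B → ℝ := fun b => ∑ a, q (a, b) with hqB
  have hA0 : ∀ a, 0 ≤ qA a := fun a => Finset.sum_nonneg fun b _ => h0 (a, b)
  have hB0 : ∀ b, 0 ≤ qB b := fun b => Finset.sum_nonneg fun a _ => h0 (a, b)
  have hA1 : ∑ a, qA a = 1 := by rw [← h1, Fintype.sum_prod_type]
  have hB1 : ∑ b, qB b = 1 := by rw [← h1, Fintype.sum_prod_type_right]
  have hle : ∀ z : A × B, q z ≤ qA z.1 :=
    fun z => Finset.single_le_sum (fun b _ => h0 (z.1, b)) (Finset.mem_univ z.2)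
  have hle' : ∀ z : A × B, q z ≤ qB z.2 :=
    fun z => Finset.single_le_sum (fun a _ => h0 (a, z.2)) (Finset.mem_univ z.1)
  have hg := gibbs q (fun z => qA z.1 * qB z.2) h0
    (fun z => mul_nonneg (hA0 _) (hB0 _))
    (fun z hz => mul_pos (lt_of_lt_of_le hz (hle z)) (lt_of_lt_of_le hz (hle' z)))
    (by
      rw [h1, Fintype.sum_prod_type]
      simp only [← Finset.mul_sum, ← Finset.sum_mul, hA1, hB1, one_mul]
      simp only [hqB, hB1, Finset.sum_const, one_mul, le_refl]
      )
  -- rewrite the lhs of hg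
  have hsplit : ∑ z : A × B, q z * Real.logb 2 (qA z.1 * qB z.2)
      = ∑ z : A × B, q z * (Real.logb 2 (qA z.1) + Real.logb 2 (qB z.2)) := by
    apply Finset.sum_congr rfl
    intro z _
    rcases eq_or_lt_of_le (h0 z) with h | h
    · simp [← h]
    · rw [Real.logb_mul (ne_of_gt (lt_of_lt_of_le h (hle z)))
        (ne_of_gt (lt_of_lt_of_le h (hle' z)))]
  have e1 : ∑ z : A × B, q z * Real.logb 2 (qA z.1)
      = ∑ a, qA a * Real.logb 2 (qA a) := by
    rw [Fintype.sum_prod_type]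
    apply Finset.sum_congr rfl
    intro a _
    have h : ∀ y : B, q (a, y) * Real.logb 2 (qA (a, y).1)
        = q (a, y) * Real.logb 2 (qA a) := fun y => rfl
    simp only [h]
    rw [← Finset.sum_mul]
  have e2 : ∑ z : A × B, q z * Real.logb 2 (qB z.2)
      = ∑ b, qB b * Real.logb 2 (qB b) := by
    rw [Fintype.sum_prod_type_right]
    apply Finset.sum_congr rfl
    intro b _
    have h : ∀ x : A, q (x, b) * Real.logb 2 (qB (x, b).2)
        = q (x, b) * Real.logb 2 (qB b) := fun x => rfl
    simp only [h]
    rw [← Finset.sum_mul]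
  rw [hsplit] at hg
  simp only [mul_add, Finset.sum_add_distrib, e1, e2] at hg
  unfold ent
  linarith

lemma ent_prod (f : A → ℝ) (g : B → ℝ) (hf : ∑ a, f a = 1) (hg : ∑ b, g b = 1) :
    ent (fun z : A × B => f z.1 * g z.2) = ent f + ent g := by
  unfold ent
  have key : ∀ z : A × B, f z.1 * g z.2 * Real.logb 2 (f z.1 * g z.2)
      = f z.1 * g z.2 * Real.logb 2 (f z.1) + f z.1 * g z.2 * Real.logb 2 (g z.2) := by
    intro z
    rcases eq_or_ne (f z.1) 0 with h | h
    · simp [h]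
    rcases eq_or_ne (g z.2) 0 with h' | h'
    · simp [h']
    rw [Real.logb_mul h h', mul_add]
  simp only [key, Finset.sum_add_distrib]
  have e1 : ∑ z : A × B, f z.1 * g z.2 * Real.logb 2 (f z.1)
      = ∑ a, f a * Real.logb 2 (f a) := by
    rw [Fintype.sum_prod_type]
    apply Finset.sum_congr rfl
    intro a _
    have h : ∀ b, f a * g b * Real.logb 2 (f a) = (f a * Real.logb 2 (f a)) * g b :=
      fun b => by ring
    simp only [h, ← Finset.mul_sum, hg, mul_one]
  have e2 : ∑ z : A × B, f z.1 * g z.2 * Real.logb 2 (g z.2)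
      = ∑ b, g b * Real.logb 2 (g b) := by
    rw [Fintype.sum_prod_type_right]
    apply Finset.sum_congr rfl
    intro b _
    have h : ∀ a, f a * g b * Real.logb 2 (g b) = (g b * Real.logb 2 (g b)) * f a :=
      fun a => by ring
    simp only [h, ← Finset.mul_sum, hf, mul_one]
  rw [e1, e2]
  ring


lemma ent_cond {A B : Type*} [Fintype A] [Fintype B] (q : A × B → ℝ) (h0 : ∀ z, 0 ≤ q z) :
    ∑ a, (∑ b, q (a, b)) * ent (fun b => q (a, b) / (∑ b', q (a, b')))
      = ent q - ent (fun a => ∑ b, q (a, b)) := by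
  set qA : A → ℝ := fun a => ∑ b, q (a, b) with hqA
  have key : ∀ a, qA a * ent (fun b => q (a, b) / qA a)
      = - ∑ b, q (a, b) * Real.logb 2 (q (a, b)) + qA a * Real.logb 2 (qA a) := by
    intro a
    rcases eq_or_lt_of_le (Finset.sum_nonneg (fun b _ => h0 (a, b)) : 0 ≤ qA a) with h | h
    · have hz : ∀ b, q (a, b) = 0 := by
        intro b
        have := (Finset.sum_eq_zero_iff_of_nonneg (fun b _ => h0 (a, b))).1 h.symm
        exact this b (Finset.mem_univ b)
      have hqa0 : qA a = 0 := h.symm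
      simp [hqa0, hz, ent]
    · unfold ent
      rw [mul_neg, Finset.mul_sum]
      have hterm : ∀ b, qA a * (q (a, b) / qA a * Real.logb 2 (q (a, b) / qA a))
          = q (a, b) * Real.logb 2 (q (a, b)) - q (a, b) * Real.logb 2 (qA a) := by
        intro b
        rcases eq_or_lt_of_le (h0 (a, b)) with h' | h'
        · simp [← h']
        · rw [Real.logb_div (ne_of_gt h') (ne_of_gt h)]
          rw [← mul_assoc, mul_div_cancel₀ _ (ne_of_gt h), mul_sub]
      simp only [hterm, Finset.sum_sub_distrib, ← Finset.sum_mul]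
      have : (∑ i : B, q (a, i)) = qA a := rfl
      rw [this]
      ring
  simp only [hqA] at key
  simp only [key, Finset.sum_add_distrib]
  unfold ent
  rw [Fintype.sum_prod_type]
  rw [Finset.sum_neg_distrib]
  ring


end EntLemmas

/-- If `W ⊥ (X,Y)`, `I(U;X) = ε` and `H(Y|U,X,W) = 0`, then
`H(U) ≥ min_{x ∈ 𝒳} H(Y|X=x) + ε`, the minimum being over `x` with `P_X(x) > 0`. -/
theorem stmt4 {X Y W U : Type*} [Fintype X] [Fintype Y] [Fintype W] [Fintype U]
    (p : X × Y × W × U → ℝ) (hpos : ∀ z, 0 ≤ p z) (hsum : ∑ z, p z = 1)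
    (pX : X → ℝ) (hpX : ∀ x, pX x = ∑ y, ∑ w, ∑ u, p (x, y, w, u))
    (pW : W → ℝ) (hpW : ∀ w, pW w = ∑ x, ∑ y, ∑ u, p (x, y, w, u))
    (pU : U → ℝ) (hpU : ∀ u, pU u = ∑ x, ∑ y, ∑ w, p (x, y, w, u))
    (pXY : X × Y → ℝ) (hpXY : ∀ x y, pXY (x, y) = ∑ w, ∑ u, p (x, y, w, u))
    (pXU : X × U → ℝ) (hpXU : ∀ x u, pXU (x, u) = ∑ y, ∑ w, p (x, y, w, u))
    (pXWU : X × W × U → ℝ) (hpXWU : ∀ x w u, pXWU (x, w, u) = ∑ y, p (x, y, w, u))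
    -- W is independent of (X,Y)
    (hindep : ∀ x y w, (∑ u, p (x, y, w, u)) = pXY (x, y) * pW w)
    (ε : ℝ) (hε : 0 ≤ ε)
    -- I(U;X) = ε
    (hI : ent pU + ent pX - ent pXU = ε)
    -- H(Y|U,X,W) = 0
    (hH : ent p - ent pXWU = 0)
    -- S is the support of X
    (S : Finset X) (hS : ∀ x, x ∈ S ↔ 0 < pX x) (hSne : S.Nonempty) :
    -- H(U) ≥ min_{x : P_X(x)>0} H(Y|X=x) + ε
    ent pU ≥ S.inf' hSne (fun x => ent (fun y => pXY (x, y) / pX x)) + ε := by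
  classical
  -- basic sum fact
  have hsum' : ∑ x, ∑ y, ∑ w, ∑ u, p (x, y, w, u) = 1 := by
    rw [← hsum]
    simp only [Fintype.sum_prod_type]
  -- nonnegativity of marginals
  have hpXY0 : ∀ z : X × Y, 0 ≤ pXY z := by
    rintro ⟨x, y⟩
    rw [hpXY]
    exact Finset.sum_nonneg fun w _ => Finset.sum_nonneg fun u _ => hpos _
  have hpX0 : ∀ x, 0 ≤ pX x := by
    intro x
    rw [hpX]
    exact Finset.sum_nonneg fun y _ => Finset.sum_nonneg fun w _ =>
      Finset.sum_nonneg fun u _ => hpos _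
  have hpXWU0 : ∀ z : X × W × U, 0 ≤ pXWU z := by
    rintro ⟨x, w, u⟩
    rw [hpXWU]
    exact Finset.sum_nonneg fun y _ => hpos _
  -- marginal sums equal 1
  have hpX1 : ∑ x, pX x = 1 := by
    simp only [hpX]; exact hsum'
  have hpW1 : ∑ w, pW w = 1 := by
    simp only [hpW]
    rw [← hsum']
    calc ∑ w, ∑ x, ∑ y, ∑ u, p (x, y, w, u)
        = ∑ x, ∑ w, ∑ y, ∑ u, p (x, y, w, u) := Finset.sum_comm
      _ = ∑ x, ∑ y, ∑ w, ∑ u, p (x, y, w, u) :=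
          Finset.sum_congr rfl fun x _ => Finset.sum_comm
  have hpXY1 : ∑ z : X × Y, pXY z = 1 := by
    rw [Fintype.sum_prod_type]
    simp only [hpXY]
    exact hsum'
  -- (7) conditional entropy decomposition for pXY
  have hmargXY : ∀ x, ∑ y, pXY (x, y) = pX x := by
    intro x
    rw [hpX]
    exact Finset.sum_congr rfl fun y _ => hpXY x y
  have hcond : ∑ x, pX x * ent (fun y => pXY (x, y) / pX x)
      = ent pXY - ent pX := by
    have h := ent_cond pXY hpXY0
    simp only [hmargXY] at h
    exact h
  -- (B) ent pXY + ent pW ≤ ent p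
  have hB : ent pXY + ent pW ≤ ent p := by
    set e : (X × Y × W) × U ≃ X × Y × W × U :=
      { toFun := fun z => (z.1.1, z.1.2.1, z.1.2.2, z.2)
        invFun := fun z => ((z.1, z.2.1, z.2.2.1), z.2.2.2)
        left_inv := fun z => rfl
        right_inv := fun z => rfl } with he
    set r : (X × Y × W) × U → ℝ := fun z => p (e z) with hr
    have hrent : ent r = ent p := ent_comp_equiv e p
    have hr0 : ∀ z, 0 ≤ r z := fun z => hpos _
    have hmarg : (fun a : X × Y × W => ∑ u, r (a, u))
        = fun a : X × Y × W => pXY (a.1, a.2.1) * pW a.2.2 := by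
      funext a
      exact hindep a.1 a.2.1 a.2.2
    have h1 : ent (fun a : X × Y × W => ∑ u, r (a, u)) ≤ ent r :=
      ent_marg_le r hr0
    rw [hmarg, hrent] at h1
    -- identify the marginal entropy with ent pXY + ent pW
    have h2 : ent (fun a : X × Y × W => pXY (a.1, a.2.1) * pW a.2.2)
        = ent pXY + ent pW := by
      set e2 : (X × Y) × W ≃ X × Y × W :=
        { toFun := fun z => (z.1.1, z.1.2, z.2)
          invFun := fun z => ((z.1, z.2.1), z.2.2)
          left_inv := fun z => rfl
          right_inv := fun z => rfl } with he2
      have := ent_comp_equiv e2 (fun a : X × Y × W => pXY (a.1, a.2.1) * pW a.2.2)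
      have heq : (fun z : (X × Y) × W =>
          (fun a : X × Y × W => pXY (a.1, a.2.1) * pW a.2.2) (e2 z))
          = fun z : (X × Y) × W => pXY z.1 * pW z.2 := by
        funext z
        rfl
      rw [heq] at this
      rw [← this]
      exact ent_prod pXY pW hpXY1 hpW1
    rw [h2] at h1
    exact h1
  -- (A) ent pXWU ≤ ent pXU + ent pW
  have hA : ent pXWU ≤ ent pXU + ent pW := by
    set e3 : (X × U) × W ≃ X × W × U :=
      { toFun := fun z => (z.1.1, z.2, z.1.2)
        invFun := fun z => ((z.1, z.2.2), z.2.1)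
        left_inv := fun z => rfl
        right_inv := fun z => rfl } with he3
    set s : (X × U) × W → ℝ := fun z => pXWU (e3 z) with hs
    have hsent : ent s = ent pXWU := ent_comp_equiv e3 pXWU
    have hs0 : ∀ z, 0 ≤ s z := fun z => hpXWU0 _
    have hsval : ∀ (x : X) (u : U) (w : W), s ((x, u), w) = ∑ y, p (x, y, w, u) :=
      fun x u w => hpXWU x w u
    have hs1 : ∑ z : (X × U) × W, s z = 1 := by
      rw [Fintype.sum_prod_type, Fintype.sum_prod_type]
      rw [← hsum']
      apply Finset.sum_congr rfl; intro x _
      simp only [hsval]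
      exact sum3_rev (fun u w y => p (x, y, w, u))
    have hmarg1 : (fun a : X × U => ∑ w, s (a, w)) = pXU := by
      funext a
      obtain ⟨x, u⟩ := a
      rw [hpXU x u]
      calc ∑ w, s ((x, u), w) = ∑ w, ∑ y, p (x, y, w, u) := by
            apply Finset.sum_congr rfl; intro w _
            exact hsval x u w
        _ = ∑ y, ∑ w, p (x, y, w, u) := Finset.sum_comm
    have hmarg2 : (fun w : W => ∑ a : X × U, s (a, w)) = pW := by
      funext w
      rw [hpW w]
      rw [Fintype.sum_prod_type]
      apply Finset.sum_congr rfl; intro x _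
      calc ∑ u, s ((x, u), w) = ∑ u, ∑ y, p (x, y, w, u) := by
            apply Finset.sum_congr rfl; intro u _
            exact hsval x u w
        _ = ∑ y, ∑ u, p (x, y, w, u) := Finset.sum_comm
    have h := ent_subadd s hs0 hs1
    rw [hmarg1, hmarg2, hsent] at h
    exact h
  -- (8) minimum bound
  set f : X → ℝ := fun x => ent (fun y => pXY (x, y) / pX x) with hf
  set m : ℝ := S.inf' hSne f with hm
  have hzero : ∀ x, x ∉ S → pX x = 0 := by
    intro x hx
    by_contra h
    exact hx ((hS x).2 (lt_of_le_of_ne (hpX0 x) (Ne.symm h)))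
  have hsumS : ∑ x ∈ S, pX x = 1 := by
    rw [← hpX1]
    apply Finset.sum_subset (Finset.subset_univ S)
    intro x _ hx
    exact hzero x hx
  have hminle : m ≤ ∑ x, pX x * f x := by
    have e1 : ∑ x, pX x * f x = ∑ x ∈ S, pX x * f x := by
      symm
      apply Finset.sum_subset (Finset.subset_univ S)
      intro x _ hx
      rw [hzero x hx, zero_mul]
    rw [e1]
    calc m = m * ∑ x ∈ S, pX x := by rw [hsumS, mul_one]
      _ = ∑ x ∈ S, m * pX x := by rw [Finset.mul_sum]
      _ ≤ ∑ x ∈ S, pX x * f x := by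
          apply Finset.sum_le_sum
          intro x hx
          rw [mul_comm]
          exact mul_le_mul_of_nonneg_left (Finset.inf'_le f hx) (hpX0 x)
  -- final assembly
  have hchain : ent pXY - ent pX ≤ ent pXU - ent pX := by linarith
  have : m ≤ ent pXY - ent pX := by rw [← hcond]; exact hminle
  linarith
end

section
/- Let U satisfy I(X;U|Y,W) ≤ log(I(X;Y)+1)+4 with (X,W) independent of U, and define Z = X with probability α and Z = c (a fresh constant symbol) with probability 1−α, independently of everything else via the randomization, where α = ε/H(X). Then Ũ = (U,Z) satisfies I(Ũ;X) = ε and I(X;Ũ|Y,W) = (1−α) I(X;U|Y,W) + α H(X|Y) ≤ α H(X|Y) + (1−α)(log(I(X;Y)+1)+4). -/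
noncomputable def Lf (a : ℝ) : ℝ := a * Real.logb 2 a

lemma Lf_zero : Lf 0 = 0 := by simp [Lf]

lemma Lf_mul {a b : ℝ} (ha : 0 ≤ a) (hb : 0 ≤ b) :
    Lf (a * b) = b * Lf a + a * Lf b := by
  rcases eq_or_lt_of_le ha with h | h
  · simp [Lf, ← h]
  rcases eq_or_lt_of_le hb with h' | h'
  · simp [Lf, ← h']
  · unfold Lf
    rw [Real.logb_mul (ne_of_gt h) (ne_of_gt h')]
    ring

lemma ent_eq {α : Type*} [Fintype α] (q : α → ℝ) : ent q = -∑ a, Lf (q a) := rfl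

lemma sum_Lf_smul {T : Type*} [Fintype T] (s : T → ℝ) (c : ℝ) (hc : 0 ≤ c)
    (hs : ∀ t, 0 ≤ s t) :
    ∑ t, Lf (c * s t) = (∑ t, s t) * Lf c + c * ∑ t, Lf (s t) := by
  rw [Finset.sum_congr rfl fun t _ => Lf_mul hc (hs t)]
  rw [Finset.sum_add_distrib, ← Finset.sum_mul, ← Finset.mul_sum]

lemma sum_Lf_prod {A B : Type*} [Fintype A] [Fintype B] (f : A → ℝ) (g : B → ℝ)
    (hf : ∀ a, 0 ≤ f a) (hg : ∀ b, 0 ≤ g b) :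
    ∑ a, ∑ b, Lf (f a * g b)
      = (∑ b, g b) * ∑ a, Lf (f a) + (∑ a, f a) * ∑ b, Lf (g b) := by
  have h : ∀ a, ∑ b, Lf (f a * g b) = (∑ b, g b) * Lf (f a) + f a * ∑ b, Lf (g b) := by
    intro a
    exact sum_Lf_smul g (f a) (hf a) hg
  rw [Finset.sum_congr rfl fun a _ => h a, Finset.sum_add_distrib,
    ← Finset.mul_sum, ← Finset.sum_mul]

lemma sum_Lf_smul_prod {A B : Type*} [Fintype A] [Fintype B] (f : A → ℝ) (g : B → ℝ)
    (c : ℝ) (hc : 0 ≤ c) (hf : ∀ a, 0 ≤ f a) (hg : ∀ b, 0 ≤ g b)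
    (hfs : ∑ a, f a = 1) (hgs : ∑ b, g b = 1) :
    ∑ a, ∑ b, Lf (c * (f a * g b))
      = Lf c + c * ((∑ a, Lf (f a)) + ∑ b, Lf (g b)) := by
  have ha := sum_Lf_smul (fun p : A × B => f p.1 * g p.2) c hc
    (fun p => mul_nonneg (hf _) (hg _))
  simp only [Fintype.sum_prod_type] at ha
  rw [ha]
  have hs1 : ∑ a, ∑ b, f a * g b = 1 := by
    rw [Finset.sum_congr rfl fun a _ => by rw [← Finset.mul_sum, hgs, mul_one], hfs]
  rw [hs1, sum_Lf_prod f g hf hg, hfs, hgs]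
  ring

lemma sum_rot4 {A B C D : Type*} [Fintype A] [Fintype B] [Fintype C] [Fintype D]
    (f : A → B → C → D → ℝ) :
    ∑ a, ∑ b, ∑ c, ∑ d, f a b c d = ∑ b, ∑ c, ∑ d, ∑ a, f a b c d := by
  rw [Finset.sum_comm]
  exact Finset.sum_congr rfl fun b _ => by
    rw [Finset.sum_comm]
    exact Finset.sum_congr rfl fun c _ => Finset.sum_comm
/-- Randomized-response augmentation step of the ESFRL proof: if `W ⊥ (X,Y)`, `U ⊥ (X,W)`,
`H(Y|U,X,W) = 0` and `I(X;U|Y,W) ≤ log(I(X;Y)+1)+4`, and `Z = X` w.p. `α = ε/H(X)` and a fresh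
symbol `c` (here `none`) w.p. `1−α` (switch independent of everything), then `Ũ = (U,Z)` satisfies
`I(Ũ;X) = ε` and `I(X;Ũ|Y,W) = (1−α) I(X;U|Y,W) + α H(X|Y) ≤ α H(X|Y) + (1−α)(log(I(X;Y)+1)+4)`. -/
theorem stmt12 {X Y W U : Type*} [Fintype X] [Fintype Y] [Fintype W] [Fintype U]
    [DecidableEq X]
    (q : X × Y × W × U → ℝ) (hpos : ∀ z, 0 ≤ q z) (hsum : ∑ z, q z = 1)
    (pX : X → ℝ) (hpX : ∀ x, pX x = ∑ y, ∑ w, ∑ u, q (x, y, w, u))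
    (pY : Y → ℝ) (hpY : ∀ y, pY y = ∑ x, ∑ w, ∑ u, q (x, y, w, u))
    (pW : W → ℝ) (hpW : ∀ w, pW w = ∑ x, ∑ y, ∑ u, q (x, y, w, u))
    (pU : U → ℝ) (hpU : ∀ u, pU u = ∑ x, ∑ y, ∑ w, q (x, y, w, u))
    (pXY : X × Y → ℝ) (hpXY : ∀ x y, pXY (x, y) = ∑ w, ∑ u, q (x, y, w, u))
    (pXW : X × W → ℝ) (hpXW : ∀ x w, pXW (x, w) = ∑ y, ∑ u, q (x, y, w, u))
    (pYW : Y × W → ℝ) (hpYW : ∀ y w, pYW (y, w) = ∑ x, ∑ u, q (x, y, w, u))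
    (pXYW : X × Y × W → ℝ) (hpXYW : ∀ x y w, pXYW (x, y, w) = ∑ u, q (x, y, w, u))
    (pYWU : Y × W × U → ℝ) (hpYWU : ∀ y w u, pYWU (y, w, u) = ∑ x, q (x, y, w, u))
    (pXWU : X × W × U → ℝ) (hpXWU : ∀ x w u, pXWU (x, w, u) = ∑ y, q (x, y, w, u))
    -- W independent of (X,Y)
    (hindepW : ∀ x y w, pXYW (x, y, w) = pXY (x, y) * pW w)
    -- (X,W) independent of U
    (hindepU : ∀ x w u, pXWU (x, w, u) = pXW (x, w) * pU u)
    -- H(Y|U,X,W) = 0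
    (hH : ent q - ent pXWU = 0)
    -- I(X;U|Y,W) ≤ log(I(X;Y)+1)+4
    (hCMI : ent pXYW + ent pYWU - ent pYW - ent q
        ≤ Real.logb 2 ((ent pX + ent pY - ent pXY) + 1) + 4)
    (ε α : ℝ) (hε0 : 0 ≤ ε) (hεH : ε ≤ ent pX) (hHX : 0 < ent pX)
    (hα : α = ε / ent pX)
    -- r is the joint law of (X,Y,W,Ũ) with Ũ = (U,Z), Z = X w.p. α and none w.p. 1−α
    (r : X × Y × W × (U × Option X) → ℝ)
    (hr : ∀ x y w u z, r (x, y, w, (u, z))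
        = q (x, y, w, u) * (if z = some x then α else if z = none then 1 - α else 0)) :
    -- I(Ũ;X) = ε
    (ent (fun t : U × Option X => ∑ x, ∑ y, ∑ w, r (x, y, w, t))
      + ent pX
      - ent (fun xt : X × (U × Option X) => ∑ y, ∑ w, r (xt.1, y, w, xt.2)) = ε) ∧
    -- I(X;Ũ|Y,W) = (1−α) I(X;U|Y,W) + α H(X|Y)
    (ent pXYW
      + ent (fun ywt : Y × W × (U × Option X) => ∑ x, r (x, ywt.1, ywt.2.1, ywt.2.2))
      - ent pYW - ent r
      = (1 - α) * (ent pXYW + ent pYWU - ent pYW - ent q)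
        + α * (ent pXY - ent pY)) ∧
    -- I(X;Ũ|Y,W) ≤ α H(X|Y) + (1−α)(log(I(X;Y)+1)+4)
    (ent pXYW
      + ent (fun ywt : Y × W × (U × Option X) => ∑ x, r (x, ywt.1, ywt.2.1, ywt.2.2))
      - ent pYW - ent r
      ≤ α * (ent pXY - ent pY)
        + (1 - α) * (Real.logb 2 ((ent pX + ent pY - ent pXY) + 1) + 4)) := by
  -- basic facts about α
  have hα0 : 0 ≤ α := by rw [hα]; positivity
  have hb0 : 0 ≤ 1 - α := by
    rw [hα, sub_nonneg, div_le_one hHX]; exact hεH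
  -- nonnegativity of marginals
  have hpX0 : ∀ x, 0 ≤ pX x := fun x => by
    rw [hpX]
    exact Finset.sum_nonneg fun _ _ => Finset.sum_nonneg fun _ _ =>
      Finset.sum_nonneg fun _ _ => hpos _
  have hpY0 : ∀ y, 0 ≤ pY y := fun y => by
    rw [hpY]
    exact Finset.sum_nonneg fun _ _ => Finset.sum_nonneg fun _ _ =>
      Finset.sum_nonneg fun _ _ => hpos _
  have hpW0 : ∀ w, 0 ≤ pW w := fun w => by
    rw [hpW]
    exact Finset.sum_nonneg fun _ _ => Finset.sum_nonneg fun _ _ =>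
      Finset.sum_nonneg fun _ _ => hpos _
  have hpU0 : ∀ u, 0 ≤ pU u := fun u => by
    rw [hpU]
    exact Finset.sum_nonneg fun _ _ => Finset.sum_nonneg fun _ _ =>
      Finset.sum_nonneg fun _ _ => hpos _
  have hpXY0 : ∀ t : X × Y, 0 ≤ pXY t := by
    rintro ⟨x, y⟩
    rw [hpXY]
    exact Finset.sum_nonneg fun _ _ => Finset.sum_nonneg fun _ _ => hpos _
  have hpYWU0 : ∀ t : Y × W × U, 0 ≤ pYWU t := by
    rintro ⟨y, w, u⟩
    rw [hpYWU]
    exact Finset.sum_nonneg fun _ _ => hpos _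
  -- sum-to-one facts
  have hq4 : ∑ x, ∑ y, ∑ w, ∑ u, q (x, y, w, u) = 1 := by
    simpa [Fintype.sum_prod_type] using hsum
  have hq4' : ∑ x, ∑ y, ∑ u, ∑ w, q (x, y, w, u) = 1 := by
    rw [← hq4]
    exact Finset.sum_congr rfl fun x _ => Finset.sum_congr rfl fun y _ => Finset.sum_comm
  have sX : ∑ x, pX x = 1 := by
    rw [Finset.sum_congr rfl fun x _ => hpX x]; exact hq4
  have sY : ∑ y, pY y = 1 := by
    rw [Finset.sum_congr rfl fun y _ => hpY y, Finset.sum_comm]; exact hq4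
  have sW : ∑ w, pW w = 1 := by
    rw [Finset.sum_congr rfl fun w _ => hpW w,
      sum_rot4 fun w x y u => q (x, y, w, u)]
    exact hq4'
  have sU : ∑ u, pU u = 1 := by
    rw [Finset.sum_congr rfl fun u _ => hpU u,
      sum_rot4 fun u x y w => q (x, y, w, u)]
    exact hq4
  have sXY : ∑ x, ∑ y, pXY (x, y) = 1 := by
    rw [Finset.sum_congr rfl fun x _ => Finset.sum_congr rfl fun y _ => hpXY x y]
    exact hq4
  have sYWU : ∑ y, ∑ w, ∑ u, pYWU (y, w, u) = 1 := by
    rw [Finset.sum_congr rfl fun y _ => Finset.sum_congr rfl fun w _ =>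
      Finset.sum_congr rfl fun u _ => hpYWU y w u,
      ← sum_rot4 fun x y w u => q (x, y, w, u)]
    exact hq4
  -- factorizations
  have hpXsum : ∀ x, (∑ w, pXW (x, w)) = pX x := by
    intro x
    rw [Finset.sum_congr rfl fun w _ => hpXW x w, hpX x]
    exact Finset.sum_comm
  have hXU : ∀ x u, (∑ y, ∑ w, q (x, y, w, u)) = pX x * pU u := by
    intro x u
    rw [Finset.sum_comm,
      Finset.sum_congr rfl fun w _ => (hpXWU x w u).symm,
      Finset.sum_congr rfl fun w _ => hindepU x w u,
      ← Finset.sum_mul, hpXsum x]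
  have hpYsum : ∀ y, (∑ x, pXY (x, y)) = pY y := by
    intro y
    rw [Finset.sum_congr rfl fun x _ => hpXY x y, hpY y]
  have hYWfact : ∀ y w, pYW (y, w) = pY y * pW w := by
    intro y w
    rw [hpYW y w,
      Finset.sum_congr rfl fun x _ => (hpXYW x y w).symm,
      Finset.sum_congr rfl fun x _ => hindepW x y w,
      ← Finset.sum_mul, hpYsum y]
  -- entropy additivity under independence
  have eXYW : ent pXYW = ent pXY + ent pW := by
    rw [ent_eq pXYW, ent_eq pXY, ent_eq pW]
    simp only [Fintype.sum_prod_type]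
    rw [Finset.sum_congr rfl fun x _ => Finset.sum_congr rfl fun y _ =>
      Finset.sum_congr rfl fun w _ => by rw [hindepW x y w]]
    have h := sum_Lf_prod pXY pW hpXY0 hpW0
    simp only [Fintype.sum_prod_type] at h
    rw [h, sW, sXY]
    ring
  have eYW : ent pYW = ent pY + ent pW := by
    rw [ent_eq pYW, ent_eq pY, ent_eq pW]
    simp only [Fintype.sum_prod_type]
    rw [Finset.sum_congr rfl fun y _ => Finset.sum_congr rfl fun w _ => by
      rw [hYWfact y w]]
    rw [sum_Lf_prod pY pW hpY0 hpW0, sY, sW]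
    ring
  -- option-sum helper
  have hz : ∀ (x : X) (v : ℝ),
      (∑ z : Option X, Lf (v * (if z = some x then α else if z = none then 1 - α else 0)))
        = Lf (α * v) + Lf ((1 - α) * v) := by
    intro x v
    rw [Fintype.sum_option]
    have h1 : ∀ x' : X,
        Lf (v * (if (some x' : Option X) = some x then α
          else if (some x' : Option X) = none then 1 - α else 0))
          = if x' = x then Lf (v * α) else 0 := by
      intro x'
      rcases eq_or_ne x' x with hx | hx
      · subst hx; simp
      · simp [hx, Lf_zero]
    rw [Finset.sum_congr rfl fun x' _ => h1 x',
      Fintype.sum_ite_eq' x fun _ => Lf (v * α)]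
    simp [mul_comm v α, mul_comm v (1 - α)]
    ring
  -- flat Lf sums
  have SLq : ∑ x, ∑ y, ∑ w, ∑ u, Lf (q (x, y, w, u)) = -ent q := by
    rw [ent_eq, neg_neg]
    simp only [Fintype.sum_prod_type]
  have hLa : ∑ x, ∑ y, ∑ w, ∑ u, Lf (α * q (x, y, w, u)) = Lf α + α * -ent q := by
    have h := sum_Lf_smul q α hα0 hpos
    simp only [Fintype.sum_prod_type] at h
    rw [h, hq4, SLq]
    ring
  have hLb : ∑ x, ∑ y, ∑ w, ∑ u, Lf ((1 - α) * q (x, y, w, u))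
      = Lf (1 - α) + (1 - α) * -ent q := by
    have h := sum_Lf_smul q (1 - α) hb0 hpos
    simp only [Fintype.sum_prod_type] at h
    rw [h, hq4, SLq]
    ring
  -- entropy of r
  have hzq : ∀ x y w u, (∑ z : Option X, Lf (r (x, y, w, (u, z))))
      = Lf (α * q (x, y, w, u)) + Lf ((1 - α) * q (x, y, w, u)) := by
    intro x y w u
    rw [show (∑ z : Option X, Lf (r (x, y, w, (u, z))))
        = ∑ z : Option X, Lf (q (x, y, w, u)
            * (if z = some x then α else if z = none then 1 - α else 0)) from
      Finset.sum_congr rfl fun z _ => by rw [hr x y w u z]]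
    exact hz x _
  have er : ent r = -Lf α - Lf (1 - α) + ent q := by
    rw [ent_eq]
    simp only [Fintype.sum_prod_type]
    rw [Finset.sum_congr rfl fun x _ => Finset.sum_congr rfl fun y _ =>
      Finset.sum_congr rfl fun w _ => Finset.sum_congr rfl fun u _ => hzq x y w u]
    simp only [Finset.sum_add_distrib]
    rw [hLa, hLb]
    ring
  -- entropy of the (Y,W,Ũ) marginal
  have hmN : ∀ y w u, (∑ x, r (x, y, w, (u, (none : Option X)))) = (1 - α) * pYWU (y, w, u) := by
    intro y w u
    rw [Finset.sum_congr rfl fun x _ => hr x y w u none]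
    simp only [reduceCtorEq, if_false, if_true, if_pos rfl]
    rw [← Finset.sum_mul, hpYWU y w u]
    exact mul_comm _ _
  have hmS : ∀ y w u x0, (∑ x, r (x, y, w, (u, some x0))) = α * q (x0, y, w, u) := by
    intro y w u x0
    rw [Finset.sum_congr rfl fun x _ => hr x y w u (some x0)]
    have h1 : ∀ x : X, q (x, y, w, u) * (if (some x0 : Option X) = some x then α
        else if (some x0 : Option X) = none then 1 - α else 0)
        = if x = x0 then α * q (x, y, w, u) else 0 := by
      intro x
      rcases eq_or_ne x x0 with hx | hx
      · subst hx; simp [mul_comm]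
      · simp [hx, Ne.symm hx]
    rw [Finset.sum_congr rfl fun x _ => h1 x,
      Fintype.sum_ite_eq' x0 fun x => α * q (x, y, w, u)]
  have erYWU : ent (fun ywt : Y × W × (U × Option X) => ∑ x, r (x, ywt.1, ywt.2.1, ywt.2.2))
      = -Lf α - Lf (1 - α) + α * ent q + (1 - α) * ent pYWU := by
    have hzYWU : ∀ y w u, (∑ z : Option X, Lf (∑ x, r (x, y, w, (u, z))))
        = Lf ((1 - α) * pYWU (y, w, u)) + ∑ x0, Lf (α * q (x0, y, w, u)) := by
      intro y w u
      rw [Fintype.sum_option, hmN y w u]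
      congr 1
      exact Finset.sum_congr rfl fun x0 _ => by rw [hmS y w u x0]
    rw [ent_eq]
    simp only [Fintype.sum_prod_type]
    rw [Finset.sum_congr rfl fun y _ => Finset.sum_congr rfl fun w _ =>
      Finset.sum_congr rfl fun u _ => hzYWU y w u]
    simp only [Finset.sum_add_distrib]
    have p1 := sum_Lf_smul pYWU (1 - α) hb0 hpYWU0
    simp only [Fintype.sum_prod_type] at p1
    have SLYWU : ∑ y, ∑ w, ∑ u, Lf (pYWU (y, w, u)) = -ent pYWU := by
      rw [ent_eq, neg_neg]
      simp only [Fintype.sum_prod_type]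
    rw [p1, sYWU, SLYWU,
      ← sum_rot4 fun x y w u => Lf (α * q (x, y, w, u)), hLa]
    ring
  -- entropy of the Ũ marginal
  have hmUN : ∀ u, (∑ x, ∑ y, ∑ w, r (x, y, w, (u, (none : Option X)))) = (1 - α) * pU u := by
    intro u
    rw [Finset.sum_congr rfl fun x _ => Finset.sum_congr rfl fun y _ =>
      Finset.sum_congr rfl fun w _ => hr x y w u none]
    simp only [reduceCtorEq, if_false, if_true, if_pos rfl]
    simp only [← Finset.sum_mul]
    rw [hpU u]
    exact mul_comm _ _
  have hmUS : ∀ u x0, (∑ x, ∑ y, ∑ w, r (x, y, w, (u, some x0))) = α * (pX x0 * pU u) := by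
    intro u x0
    rw [Finset.sum_congr rfl fun x _ => Finset.sum_congr rfl fun y _ =>
      Finset.sum_congr rfl fun w _ => hr x y w u (some x0)]
    have h1 : ∀ x : X, (∑ y, ∑ w, q (x, y, w, u) * (if (some x0 : Option X) = some x then α
        else if (some x0 : Option X) = none then 1 - α else 0))
        = if x = x0 then α * (∑ y, ∑ w, q (x, y, w, u)) else 0 := by
      intro x
      rcases eq_or_ne x x0 with hx | hx
      · subst hx
        simp [Finset.mul_sum, mul_comm]
      · simp [hx, Ne.symm hx]
    rw [Finset.sum_congr rfl fun x _ => h1 x,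
      Fintype.sum_ite_eq' x0 fun x => α * ∑ y, ∑ w, q (x, y, w, u),
      hXU x0 u]
  have erU : ent (fun t : U × Option X => ∑ x, ∑ y, ∑ w, r (x, y, w, t))
      = -Lf α - Lf (1 - α) + ent pU + α * ent pX := by
    have hzU : ∀ u, (∑ z : Option X, Lf (∑ x, ∑ y, ∑ w, r (x, y, w, (u, z))))
        = Lf ((1 - α) * pU u) + ∑ x0, Lf (α * (pX x0 * pU u)) := by
      intro u
      rw [Fintype.sum_option, hmUN u]
      congr 1
      exact Finset.sum_congr rfl fun x0 _ => by rw [hmUS u x0]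
    rw [ent_eq]
    simp only [Fintype.sum_prod_type]
    rw [Finset.sum_congr rfl fun u _ => hzU u]
    simp only [Finset.sum_add_distrib]
    rw [sum_Lf_smul pU (1 - α) hb0 hpU0, sU]
    have h2 : ∑ u, ∑ x0, Lf (α * (pX x0 * pU u))
        = Lf α + α * ((∑ x, Lf (pX x)) + ∑ u, Lf (pU u)) := by
      rw [Finset.sum_comm]
      exact sum_Lf_smul_prod pX pU α hα0 hpX0 hpU0 sX sU
    rw [h2, ent_eq pU, ent_eq pX]
    ring
  -- entropy of the (X,Ũ) marginal
  have hmXU : ∀ x u (z : Option X), (∑ y, ∑ w, r (x, y, w, (u, z)))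
      = (pX x * pU u) * (if z = some x then α else if z = none then 1 - α else 0) := by
    intro x u z
    rw [Finset.sum_congr rfl fun y _ => Finset.sum_congr rfl fun w _ => hr x y w u z]
    simp only [← Finset.sum_mul]
    rw [hXU x u]
  have erXU : ent (fun xt : X × (U × Option X) => ∑ y, ∑ w, r (xt.1, y, w, xt.2))
      = -Lf α - Lf (1 - α) + ent pX + ent pU := by
    have hzXU : ∀ x u, (∑ z : Option X, Lf (∑ y, ∑ w, r (x, y, w, (u, z))))
        = Lf (α * (pX x * pU u)) + Lf ((1 - α) * (pX x * pU u)) := by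
      intro x u
      rw [show (∑ z : Option X, Lf (∑ y, ∑ w, r (x, y, w, (u, z))))
          = ∑ z : Option X, Lf ((pX x * pU u)
              * (if z = some x then α else if z = none then 1 - α else 0)) from
        Finset.sum_congr rfl fun z _ => by rw [hmXU x u z]]
      exact hz x _
    rw [ent_eq]
    simp only [Fintype.sum_prod_type]
    rw [Finset.sum_congr rfl fun x _ => Finset.sum_congr rfl fun u _ => hzXU x u]
    simp only [Finset.sum_add_distrib]
    have g1 : ∑ x, ∑ u, Lf (α * (pX x * pU u))
        = Lf α + α * ((∑ x, Lf (pX x)) + ∑ u, Lf (pU u)) :=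
      sum_Lf_smul_prod pX pU α hα0 hpX0 hpU0 sX sU
    have g2 : ∑ x, ∑ u, Lf ((1 - α) * (pX x * pU u))
        = Lf (1 - α) + (1 - α) * ((∑ x, Lf (pX x)) + ∑ u, Lf (pU u)) :=
      sum_Lf_smul_prod pX pU (1 - α) hb0 hpX0 hpU0 sX sU
    rw [g1, g2, ent_eq pX, ent_eq pU]
    ring
  -- conclusion
  have hαH : α * ent pX = ε := by
    rw [hα]
    exact div_mul_cancel₀ ε (ne_of_gt hHX)
  have hpart2 : ent pXYW
      + ent (fun ywt : Y × W × (U × Option X) => ∑ x, r (x, ywt.1, ywt.2.1, ywt.2.2))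
      - ent pYW - ent r
      = (1 - α) * (ent pXYW + ent pYWU - ent pYW - ent q)
        + α * (ent pXY - ent pY) := by
    rw [erYWU, er, eXYW, eYW]
    ring
  refine ⟨?_, hpart2, ?_⟩
  · rw [erU, erXU]
    linarith [hαH]
  · rw [hpart2]
    have hmul := mul_le_mul_of_nonneg_left hCMI hb0
    linarith [hmul]
end
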